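/- Suppose the interval LP is unique B-stable with basis β, and let r̃ := Sum.elim r 0. Then a point x̃* minimizes r̃ ⬝ᵥ over the union ⋃ b ∈ Set.Icc bl bu, OptStd b if and only if x̃* minimizes r̃ ⬝ᵥ over the polyhedron {x̃ | 0 ≤ x̃ ∧ (∀ j ∉ Set.range β, x̃ j = 0) ∧ bl ≤ Ãβ.mulVec (fun i => x̃ (β i)) ∧ Ãβ.mulVec (fun i => x̃ (β i)) ≤ bu}; in particular the minimum outcome value f̲ equals the optimal value of this single linear program. -/

import Mathlib

open Matrix

/-- Standard-form coefficient matrix with appended slack variables. -/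
def Atil {m n : ℕ} (A : Matrix (Fin m) (Fin n) ℝ) :
    Matrix (Fin m) (Fin n ⊕ Fin m) ℝ :=
  Matrix.fromCols A 1

/-- Standard-form feasible set: `Ã x̃ = b`, `x̃ ≥ 0`. -/
def FeasStd {m n : ℕ} (A : Matrix (Fin m) (Fin n) ℝ) (b : Fin m → ℝ) :
    Set (Fin n ⊕ Fin m → ℝ) :=
  {xt | (Atil A).mulVec xt = b ∧ 0 ≤ xt}

/-- Standard-form optimal set for the objective `c̃ = Sum.elim c 0`. -/
def OptStd {m n : ℕ} (A : Matrix (Fin m) (Fin n) ℝ) (c : Fin n → ℝ)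
    (b : Fin m → ℝ) : Set (Fin n ⊕ Fin m → ℝ) :=
  {xt ∈ FeasStd A b |
    ∀ yt ∈ FeasStd A b, Sum.elim c 0 ⬝ᵥ xt ≤ Sum.elim c 0 ⬝ᵥ yt}

theorem unique_B_stable_outcome_min_via_single_LP
    (m n : ℕ) (A : Matrix (Fin m) (Fin n) ℝ) (c r : Fin n → ℝ)
    (bl bu : Fin m → ℝ) (hb : bl ≤ bu)
    (β : Fin m → Fin n ⊕ Fin m) (hβinj : Function.Injective β)
    (hβinv : IsUnit ((Atil A).submatrix id β).det)
    (xβ : (Fin m → ℝ) → (Fin n ⊕ Fin m → ℝ))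
    (hxβ_basic : ∀ b : Fin m → ℝ, ∀ i : Fin m,
      xβ b (β i) = (((Atil A).submatrix id β)⁻¹.mulVec b) i)
    (hxβ_nonbasic : ∀ b : Fin m → ℝ, ∀ j : Fin n ⊕ Fin m,
      j ∉ Set.range β → xβ b j = 0)
    (hBstable : ∀ b ∈ Set.Icc bl bu, OptStd A c b = {xβ b})
    (xstar : Fin n ⊕ Fin m → ℝ) :
    (xstar ∈ (⋃ b ∈ Set.Icc bl bu, OptStd A c b) ∧
      ∀ yt ∈ (⋃ b ∈ Set.Icc bl bu, OptStd A c b),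
        Sum.elim r 0 ⬝ᵥ xstar ≤ Sum.elim r 0 ⬝ᵥ yt) ↔
    (xstar ∈ {xt : Fin n ⊕ Fin m → ℝ | 0 ≤ xt ∧
        (∀ j ∉ Set.range β, xt j = 0) ∧
        bl ≤ ((Atil A).submatrix id β).mulVec (fun i => xt (β i)) ∧
        ((Atil A).submatrix id β).mulVec (fun i => xt (β i)) ≤ bu} ∧
      ∀ yt ∈ {xt : Fin n ⊕ Fin m → ℝ | 0 ≤ xt ∧
        (∀ j ∉ Set.range β, xt j = 0) ∧
        bl ≤ ((Atil A).submatrix id β).mulVec (fun i => xt (β i)) ∧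
        ((Atil A).submatrix id β).mulVec (fun i => xt (β i)) ≤ bu},
        Sum.elim r 0 ⬝ᵥ xstar ≤ Sum.elim r 0 ⬝ᵥ yt) := by
  set B := (Atil A).submatrix id β with hB
  have hinv1 : B⁻¹ * B = 1 := Matrix.nonsing_inv_mul B hβinv
  have hinv2 : B * B⁻¹ = 1 := Matrix.mul_nonsing_inv B hβinv
  have hset : (⋃ b ∈ Set.Icc bl bu, OptStd A c b) =
      {xt : Fin n ⊕ Fin m → ℝ | 0 ≤ xt ∧
        (∀ j ∉ Set.range β, xt j = 0) ∧
        bl ≤ B.mulVec (fun i => xt (β i)) ∧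
        B.mulVec (fun i => xt (β i)) ≤ bu} := by
    ext xt
    simp only [Set.mem_iUnion, Set.mem_setOf_eq]
    constructor
    · rintro ⟨b, hbmem, hopt⟩
      rw [hBstable b hbmem] at hopt
      subst hopt
      have hfeas : xβ b ∈ OptStd A c b := by rw [hBstable b hbmem]; rfl
      have h0 : 0 ≤ xβ b := hfeas.1.2
      have hbas : (fun i => xβ b (β i)) = B⁻¹.mulVec b := by
        funext i; exact hxβ_basic b i
      have hBb : B.mulVec (fun i => xβ b (β i)) = b := by
        rw [hbas, Matrix.mulVec_mulVec, hinv2, Matrix.one_mulVec]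
      exact ⟨h0, fun j hj => hxβ_nonbasic b j hj, by rw [hBb]; exact hbmem.1,
        by rw [hBb]; exact hbmem.2⟩
    · rintro ⟨h0, hnb, hl, hu⟩
      refine ⟨B.mulVec (fun i => xt (β i)), ⟨hl, hu⟩, ?_⟩
      rw [hBstable _ ⟨hl, hu⟩]
      have : xβ (B.mulVec (fun i => xt (β i))) = xt := by
        funext j
        rcases Classical.em (j ∈ Set.range β) with ⟨i, rfl⟩ | hj
        · rw [hxβ_basic, Matrix.mulVec_mulVec, hinv1, Matrix.one_mulVec]
        · rw [hxβ_nonbasic _ _ hj, hnb j hj]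
      exact this.symm
  rw [hset]
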